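/- Let G be a residually finite, locally nilpotent group containing an element x whose centralizer C_G(x) is finite. Then G is finite. -/

import Mathlib

/-- In a nilpotent group, every nontrivial normal subgroup meets the center
nontrivially. -/
lemma aux_normal_meets_center {G : Type*} [Group G] [hG : Group.IsNilpotent G]
    (K : Subgroup G) [hKn : K.Normal] (hK : K ≠ ⊥) :
    ∃ z : G, z ∈ K ∧ z ∈ Subgroup.center G ∧ z ≠ 1 := by
  classical
  obtain ⟨n, hn⟩ := hG
  have hP : ∃ m, K ⊓ upperCentralSeries G m ≠ ⊥ := ⟨n, by show K ⊓ Subgroup.upperCentralSeries G n ≠ ⊥; rwa [hn, inf_top_eq]⟩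
  have hm1 : K ⊓ upperCentralSeries G (Nat.find hP) ≠ ⊥ := Nat.find_spec hP
  have hmpos : Nat.find hP ≠ 0 := by
    intro h
    apply hm1
    rw [h]; show K ⊓ Subgroup.upperCentralSeries G 0 = ⊥; rw [Subgroup.upperCentralSeries_zero]
    simp
  obtain ⟨m', hm'⟩ := Nat.exists_eq_succ_of_ne_zero hmpos
  have hprev : K ⊓ upperCentralSeries G m' = ⊥ := by
    by_contra h
    have hle : Nat.find hP ≤ m' := Nat.find_le h
    omega
  rw [hm'] at hm1
  obtain ⟨⟨z, hz⟩, hz1⟩ := Subgroup.ne_bot_iff_exists_ne_one.mp hm1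
  rw [Subgroup.mem_inf] at hz
  refine ⟨z, hz.1, ?_, by simpa using hz1⟩
  rw [Subgroup.mem_center_iff]
  intro y
  have hc : z * y * z⁻¹ * y⁻¹ ∈ upperCentralSeries G m' :=
    (mem_upperCentralSeries_succ_iff).mp hz.2 y
  have hcK : z * y * z⁻¹ * y⁻¹ ∈ K := by
    have h2 : y * z⁻¹ * y⁻¹ ∈ K := hKn.conj_mem _ (K.inv_mem hz.1) y
    have h3 : z * (y * z⁻¹ * y⁻¹) ∈ K := K.mul_mem hz.1 h2
    have : z * y * z⁻¹ * y⁻¹ = z * (y * z⁻¹ * y⁻¹) := by group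
    rwa [this]
  have hone : z * y * z⁻¹ * y⁻¹ = 1 := by
    have : z * y * z⁻¹ * y⁻¹ ∈ K ⊓ upperCentralSeries G m' := ⟨hcK, hc⟩
    rw [hprev] at this
    simpa using this
  have : z * y = y * z := by
    rw [mul_inv_eq_one, mul_inv_eq_iff_eq_mul] at hone
    exact hone
  exact this.symm

/-- A residually finite, locally nilpotent group containing an element with finite
centralizer is finite. -/
theorem stmt_12 (G : Type*) [Group G]
    (hrf : ∀ g : G, g ≠ 1 → ∃ N : Subgroup G, N.Normal ∧ N.index ≠ 0 ∧ g ∉ N)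
    (hln : ∀ s : Finset G, Group.IsNilpotent (Subgroup.closure (s : Set G)))
    (x : G) (hx : Finite (Subgroup.centralizer {x})) :
    Finite G := by
  classical
  set C := Subgroup.centralizer ({x} : Set G) with hC
  let F : G → Subgroup G := fun g => if h : g = 1 then ⊤ else (hrf g h).choose
  have hFnorm : ∀ g, (F g).Normal := by
    intro g
    by_cases h : g = 1
    · simp only [F, dif_pos h]; infer_instance
    · simp only [F, dif_neg h]; exact (hrf g h).choose_spec.1
  have hFindex : ∀ g, (F g).index ≠ 0 := by
    intro g
    by_cases h : g = 1
    · simp only [F, dif_pos h, Subgroup.index_top]; exact one_ne_zero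
    · simp only [F, dif_neg h]; exact (hrf g h).choose_spec.2.1
  have hFnotmem : ∀ g, g ≠ 1 → g ∉ F g := by
    intro g h
    simp only [F, dif_neg h]
    exact (hrf g h).choose_spec.2.2
  let N : Subgroup G := ⨅ c : C, F c
  have hNnorm : N.Normal := by
    constructor
    intro n hn g
    simp only [N, Subgroup.mem_iInf] at hn ⊢
    intro c
    exact (hFnorm c).conj_mem n (hn c) g
  have hNindex : N.index ≠ 0 :=
    Subgroup.index_iInf_ne_zero (fun c => hFindex c)
  have hNC : ∀ g ∈ N, g ∈ C → g = 1 := by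
    intro g hgN hgC
    by_contra h
    exact hFnotmem g h (Subgroup.mem_iInf.mp hgN ⟨g, hgC⟩)
  have hNbot : N = ⊥ := by
    rw [Subgroup.eq_bot_iff_forall]
    intro g hgN
    by_contra hg1
    haveI hnil := hln {g, x}
    set H := Subgroup.closure ((({g, x} : Finset G) : Set G)) with hH
    have hgH : g ∈ H := Subgroup.subset_closure (by simp)
    have hxH : x ∈ H := Subgroup.subset_closure (by simp)
    haveI : (N.subgroupOf H).Normal := hNnorm.subgroupOf H
    have hKne : N.subgroupOf H ≠ ⊥ := by
      rw [Subgroup.ne_bot_iff_exists_ne_one]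
      refine ⟨⟨⟨g, hgH⟩, Subgroup.mem_subgroupOf.mpr hgN⟩, ?_⟩
      simp only [ne_eq, Subtype.ext_iff, Subtype.ext_iff]
      simpa using hg1
    obtain ⟨z, hzK, hzc, hz1⟩ := aux_normal_meets_center (N.subgroupOf H) hKne
    have hzN : (z : G) ∈ N := Subgroup.mem_subgroupOf.mp hzK
    have hzC : (z : G) ∈ C := by
      rw [hC, Subgroup.mem_centralizer_iff]
      intro y hy
      rw [Set.mem_singleton_iff] at hy
      rw [hy]
      have h5 := Subgroup.mem_center_iff.mp hzc ⟨x, hxH⟩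
      exact congrArg Subtype.val h5
    have : (z : G) = 1 := hNC _ hzN hzC
    exact hz1 (Subtype.ext this)
  have hcard : Nat.card G ≠ 0 := by
    rw [← Subgroup.index_bot, ← hNbot]
    exact hNindex
  exact Nat.finite_of_card_ne_zero hcard
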